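/- The joint distribution of (d₃, i₃) on permutations of [n+1] beginning with 1 equals the joint distribution of (d̂, î) on Sₙ: ∑_{σ∈S̃_{n+1}} t^{d₃(σ)} q^{i₃(σ)} = ∑_{ω∈Sₙ} t^{d̂(ω)} q^{î(ω)}. -/

import Mathlib

open Finset
open scoped Classical

/-- entry of a permutation of `Fin n` at 0-indexed position `i` (0-based values). -/
def ent {n : ℕ} (σ : Equiv.Perm (Fin n)) (i : ℕ) : ℕ :=
  if h : i < n then (σ ⟨i, h⟩ : ℕ) else 0

/-- the triple `(a, b, c)` of distinct values, reduced to a permutation in `S₃`, is odd. -/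
def odd3 (a b c : ℕ) : Prop :=
  ((if b < a then 1 else 0) + (if c < a then 1 else 0) + (if c < b then 1 else 0)) % 2 = 1

instance (a b c : ℕ) : Decidable (odd3 a b c) := by
  unfold odd3; infer_instance

/-- 3-descent set, 0-indexed positions (position `i` here is paper position `i+1`). -/
def D3 {n : ℕ} (σ : Equiv.Perm (Fin n)) : Finset ℕ :=
  (Finset.range (n - 2)).filter (fun i => odd3 (ent σ i) (ent σ (i + 1)) (ent σ (i + 2)))

/-- alternating descent set, 0-indexed positions. -/
def altD {n : ℕ} (σ : Equiv.Perm (Fin n)) : Finset ℕ :=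
  (Finset.range (n - 1)).filter (fun i =>
    (Even i ∧ ent σ (i + 1) < ent σ i) ∨ (¬ Even i ∧ ent σ i < ent σ (i + 1)))

/-- number of up-down alternating permutations of `[n]` (the Euler number `Eₙ`). -/
noncomputable def EulerNum (n : ℕ) : ℕ :=
  ((Finset.univ : Finset (Equiv.Perm (Fin n))).filter (fun τ =>
    ∀ i ∈ Finset.range (n - 1),
      (Even i ∧ ent τ i < ent τ (i + 1)) ∨ (¬ Even i ∧ ent τ (i + 1) < ent τ i))).card

/-- `c³ᵢ(σ)`, 0-indexed: number of `j > i+1` with `σᵢ σᵢ₊₁ σⱼ` odd. -/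
def c3 {n : ℕ} (σ : Equiv.Perm (Fin n)) (i : ℕ) : ℕ :=
  ((Finset.range n).filter (fun j => i + 1 < j ∧ odd3 (ent σ i) (ent σ (i + 1)) (ent σ j))).card

/-- `ĉᵢ(σ)`, 0-indexed. -/
def chat {n : ℕ} (σ : Equiv.Perm (Fin n)) (i : ℕ) : ℕ :=
  ((Finset.range n).filter (fun j => i < j ∧
    ((Even i ∧ ent σ j < ent σ i) ∨ (¬ Even i ∧ ent σ i < ent σ j)))).card

/-- `i₃` of an arbitrary word `f 0, f 1, ..., f (m-1)`. -/
def i3f (m : ℕ) (f : ℕ → ℕ) : ℕ :=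
  ((Finset.range m ×ˢ Finset.range m).filter (fun p =>
    p.1 + 1 < p.2 ∧ odd3 (f p.1) (f (p.1 + 1)) (f p.2))).card

/-- the 3-inversion statistic `i₃`. -/
def i3 {n : ℕ} (σ : Equiv.Perm (Fin n)) : ℕ := i3f n (ent σ)

/-- the word `1*σ` (0-based values): `0, σ₀+1, σ₁+1, ...`. -/
def oneStar {n : ℕ} (σ : Equiv.Perm (Fin n)) : ℕ → ℕ :=
  fun i => if i = 0 then 0 else ent σ (i - 1) + 1

/-- number of alternating inversions `î(σ)`. -/
def altInv {n : ℕ} (σ : Equiv.Perm (Fin n)) : ℕ :=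
  ((Finset.range n ×ˢ Finset.range n).filter (fun p => p.1 < p.2 ∧
    ((Even p.1 ∧ ent σ p.2 < ent σ p.1) ∨ (¬ Even p.1 ∧ ent σ p.1 < ent σ p.2)))).card

/-- number of inversions of the word `f 0, ..., f (m-1)`. -/
def invf (m : ℕ) (f : ℕ → ℕ) : ℕ :=
  ((Finset.range m ×ˢ Finset.range m).filter (fun p => p.1 < p.2 ∧ f p.2 < f p.1)).card

/-- major index of the word `f 0, ..., f (m-1)` (descent at 0-indexed `i` contributes `i+1`). -/
def majf (m : ℕ) (f : ℕ → ℕ) : ℕ :=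
  ∑ i ∈ (Finset.range (m - 1)).filter (fun i => f (i + 1) < f i), (i + 1)

/-- `Â(m, r)`: number of permutations of `[m]` with `r - 1` alternating descents. -/
def Ahat (m r : ℕ) : ℕ :=
  ((Finset.univ : Finset (Equiv.Perm (Fin m))).filter (fun σ => (altD σ).card + 1 = r)).card

/-- down-up alternating: `σ₁ > σ₂ < σ₃ > ⋯`. -/
def DownUp {n : ℕ} (σ : Equiv.Perm (Fin n)) : Prop :=
  ∀ i ∈ Finset.range (n - 1),
    (Even i ∧ ent σ (i + 1) < ent σ i) ∨ (¬ Even i ∧ ent σ i < ent σ (i + 1))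

instance {n : ℕ} (σ : Equiv.Perm (Fin n)) : Decidable (DownUp σ) := by
  unfold DownUp; infer_instance

/-- up-down alternating: `σ₁ < σ₂ > σ₃ < ⋯`. -/
def UpDown {n : ℕ} (σ : Equiv.Perm (Fin n)) : Prop :=
  ∀ i ∈ Finset.range (n - 1),
    (Even i ∧ ent σ i < ent σ (i + 1)) ∨ (¬ Even i ∧ ent σ (i + 1) < ent σ i)

section Aux
open Finset
variable {m : ℕ} (σ : Equiv.Perm (Fin m))

lemma ent_lt {i : ℕ} (hi : i < m) : ent σ i < m := by
  unfold ent; rw [dif_pos hi]; exact (σ ⟨i, hi⟩).isLt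

lemma ent_inj {i j : ℕ} (hi : i < m) (hj : j < m) (h : ent σ i = ent σ j) : i = j := by
  unfold ent at h; rw [dif_pos hi, dif_pos hj] at h
  have := σ.injective (Fin.ext h)
  exact congrArg Fin.val this

lemma filter_gt_card (k : ℕ) :
    ((Finset.range m).filter (fun j => k < j)).card = m - (k + 1) := by
  have : (Finset.range m).filter (fun j => k < j) = Finset.Ico (k+1) m := by
    ext j; simp [Finset.mem_filter, Finset.mem_range, Finset.mem_Ico]; omega
  rw [this, Nat.card_Ico]

lemma card_lt_of_ssub {s t : Finset ℕ} (hsub : s ⊆ t) {x : ℕ} (hx : x ∈ t) (hx' : x ∉ s) :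
    s.card < t.card :=
  Finset.card_lt_card ⟨hsub, fun h => hx' (h hx)⟩

lemma helper_split (a : ℕ) (P : ℕ → Prop) [DecidablePred P] (ha : a + 1 < m) :
    ((Finset.range m).filter (fun j => a < j ∧ P j)).card
      = (if P (a+1) then 1 else 0) + ((Finset.range m).filter (fun j => a + 1 < j ∧ P j)).card := by
  have hu : (Finset.range m).filter (fun j => a < j ∧ P j)
      = ((Finset.range m).filter (fun j => j = a + 1 ∧ P j))
        ∪ ((Finset.range m).filter (fun j => a + 1 < j ∧ P j)) := by
    ext j
    simp only [Finset.mem_filter, Finset.mem_union, Finset.mem_range]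
    constructor
    · rintro ⟨hj, hlt, hp⟩
      rcases Nat.lt_or_ge (a+1) j with h | h
      · exact Or.inr ⟨hj, h, hp⟩
      · exact Or.inl ⟨hj, by omega, hp⟩
    · rintro (⟨hj, he, hp⟩ | ⟨hj, hlt, hp⟩)
      · exact ⟨hj, by omega, hp⟩
      · exact ⟨hj, by omega, hp⟩
  have hd : Disjoint ((Finset.range m).filter (fun j => j = a + 1 ∧ P j))
      ((Finset.range m).filter (fun j => a + 1 < j ∧ P j)) := by
    rw [Finset.disjoint_left]
    intro j hj hj'
    simp only [Finset.mem_filter] at hj hj'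
    omega
  rw [hu, Finset.card_union_of_disjoint hd]
  congr 1
  by_cases hP : P (a+1)
  · rw [if_pos hP]
    have : (Finset.range m).filter (fun j => j = a + 1 ∧ P j) = {a+1} := by
      ext j; simp only [Finset.mem_filter, Finset.mem_range, Finset.mem_singleton]
      constructor
      · rintro ⟨_, h, _⟩; exact h
      · rintro rfl; exact ⟨ha, rfl, hP⟩
    rw [this, Finset.card_singleton]
  · rw [if_neg hP]
    have : (Finset.range m).filter (fun j => j = a + 1 ∧ P j) = ∅ := by
      ext j; simp only [Finset.mem_filter, Finset.notMem_empty, iff_false]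
      rintro ⟨_, rfl, hp⟩; exact hP hp
    rw [this, Finset.card_empty]

end Aux
section Odd3
lemma odd3_bb (a b : ℕ) : ¬ odd3 a b b := by
  unfold odd3; split_ifs <;> (try simp) <;> omega

lemma odd3_lt {a b x : ℕ} (hab : a < b) (hxa : x ≠ a) : odd3 a b x ↔ (a < x ∧ x < b) := by
  unfold odd3; split_ifs <;> (try simp) <;> omega

lemma odd3_gt {a b x : ℕ} (hab : b < a) (hxa : x ≠ a) : odd3 a b x ↔ (x < b ∨ a < x) := by
  unfold odd3; split_ifs <;> (try simp) <;> omega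

lemma four1 {a b c x : ℕ} (h : odd3 a b c) (h1 : a ≠ b) (h2 : a ≠ c) (h3 : a ≠ x)
    (h4 : b ≠ c) (h5 : b ≠ x) (h6 : c ≠ x) : odd3 a b x ∨ odd3 b c x := by
  unfold odd3 at *; split_ifs at * <;> (try simp) <;> omega

lemma four2 {a b c x : ℕ} (h : ¬ odd3 a b c) (h1 : a ≠ b) (h2 : a ≠ c) (h3 : a ≠ x)
    (h4 : b ≠ c) (h5 : b ≠ x) (h6 : c ≠ x) : ¬ (odd3 a b x ∧ odd3 b c x) := by
  unfold odd3 at *; split_ifs at * <;> (try simp) <;> omega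
end Odd3
section Rest
open Finset
variable {m : ℕ}

/-- values not among the first `i` entries of `σ`. -/
def Rest (σ : Equiv.Perm (Fin m)) (i : ℕ) : Finset ℕ :=
  (Finset.range m).filter (fun v => ∀ k < i, ent σ k ≠ v)

lemma transfer (σ : Equiv.Perm (Fin m)) (i : ℕ) (p : ℕ → Prop) [DecidablePred p] :
    ((Finset.range m).filter (fun j => i ≤ j ∧ p (ent σ j))).card
      = ((Rest σ i).filter p).card := by
  apply Finset.card_bij (fun j _ => ent σ j)
  · intro j hj
    simp only [Finset.mem_filter, Finset.mem_range] at hj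
    obtain ⟨hjm, hij, hpj⟩ := hj
    simp only [Rest, Finset.mem_filter, Finset.mem_range]
    refine ⟨⟨ent_lt σ hjm, ?_⟩, hpj⟩
    intro k hk h
    have : k = j := ent_inj σ (by omega) hjm h
    omega
  · intro j hj j' hj' h
    simp only [Finset.mem_filter, Finset.mem_range] at hj hj'
    exact ent_inj σ hj.1 hj'.1 h
  · intro v hv
    simp only [Rest, Finset.mem_filter, Finset.mem_range] at hv
    obtain ⟨⟨hvm, hvk⟩, hpv⟩ := hv
    set j : Fin m := σ.symm ⟨v, hvm⟩ with hj
    refine ⟨(j : ℕ), ?_, ?_⟩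
    · simp only [Finset.mem_filter, Finset.mem_range]
      have hent : ent σ (j : ℕ) = v := by
        unfold ent; rw [dif_pos j.isLt]
        simp [hj]
      refine ⟨j.isLt, ?_, by rw [hent]; exact hpv⟩
      by_contra hcon
      exact hvk _ (by omega) hent
    · unfold ent; rw [dif_pos j.isLt]; simp [hj]

lemma Rest_card (σ : Equiv.Perm (Fin m)) (i : ℕ) : (Rest σ i).card = m - i := by
  have h := transfer σ i (fun _ => True)
  simp only [and_true, Finset.filter_true] at h
  rw [← h]
  have : (Finset.range m).filter (fun j => i ≤ j) = Finset.Ico i m := by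
    ext j; simp [Finset.mem_filter, Finset.mem_range, Finset.mem_Ico]; omega
  rw [this, Nat.card_Ico]

lemma mem_Rest_self (σ : Equiv.Perm (Fin m)) {i : ℕ} (hi : i < m) : ent σ i ∈ Rest σ i := by
  simp only [Rest, Finset.mem_filter, Finset.mem_range]
  exact ⟨ent_lt σ hi, fun k hk h => by have := ent_inj σ (by omega) hi h; omega⟩

lemma not_mem_Rest (σ : Equiv.Perm (Fin m)) {k i : ℕ} (hk : k < i) (hkm : k < m) :
    ent σ k ∉ Rest σ i := by
  simp only [Rest, Finset.mem_filter, Finset.mem_range, not_and]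
  intro _ h
  exact h k hk rfl

lemma Rest_succ (σ : Equiv.Perm (Fin m)) {i : ℕ} (hi : i < m) :
    Rest σ (i+1) = (Rest σ i).erase (ent σ i) := by
  ext v
  simp only [Rest, Finset.mem_erase, Finset.mem_filter, Finset.mem_range]
  constructor
  · rintro ⟨hv, hk⟩
    exact ⟨fun h => hk i (by omega) h.symm, hv, fun k hkk => hk k (by omega)⟩
  · rintro ⟨hne, hv, hk⟩
    refine ⟨hv, fun k hkk => ?_⟩
    rcases Nat.lt_or_ge k i with h | h
    · exact hk k h
    · have : k = i := by omega
      subst this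
      exact fun he => hne he.symm

lemma Rest_congr {σ σ' : Equiv.Perm (Fin m)} (i : ℕ) (h : ∀ k < i, ent σ k = ent σ' k) :
    Rest σ i = Rest σ' i := by
  unfold Rest
  apply Finset.filter_congr
  intro v _
  constructor <;> intro hv k hk <;> [rw [← h k hk]; rw [h k hk]] <;> exact hv k hk
end Rest
section Char
open Finset
variable {m : ℕ}

lemma chat_even (σ : Equiv.Perm (Fin m)) {i : ℕ} (hi : i < m) (he : Even i) :
    chat σ i = ((Rest σ (i+1)).filter (fun v => v < ent σ i)).card := by
  unfold chat
  rw [← transfer σ (i+1) (fun v => v < ent σ i)]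
  apply congrArg
  apply Finset.filter_congr
  intro j _
  constructor
  · rintro ⟨hij, (⟨_, hlt⟩ | ⟨hne, _⟩)⟩
    · exact ⟨by omega, hlt⟩
    · exact absurd he hne
  · rintro ⟨hij, hlt⟩
    exact ⟨by omega, Or.inl ⟨he, hlt⟩⟩

lemma chat_odd (σ : Equiv.Perm (Fin m)) {i : ℕ} (hi : i < m) (ho : ¬ Even i) :
    chat σ i = ((Rest σ (i+1)).filter (fun v => ent σ i < v)).card := by
  unfold chat
  rw [← transfer σ (i+1) (fun v => ent σ i < v)]
  apply congrArg
  apply Finset.filter_congr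
  intro j _
  constructor
  · rintro ⟨hij, (⟨he, _⟩ | ⟨_, hlt⟩)⟩
    · exact absurd he ho
    · exact ⟨by omega, hlt⟩
  · rintro ⟨hij, hlt⟩
    exact ⟨by omega, Or.inr ⟨ho, hlt⟩⟩

lemma chat_even' (σ : Equiv.Perm (Fin m)) {i : ℕ} (hi : i < m) (he : Even i) :
    chat σ i = ((Rest σ i).filter (fun v => v < ent σ i)).card := by
  rw [chat_even σ hi he, Rest_succ σ hi, Finset.filter_erase,
    Finset.erase_eq_of_notMem]
  simp

lemma chat_odd' (σ : Equiv.Perm (Fin m)) {i : ℕ} (hi : i < m) (ho : ¬ Even i) :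
    chat σ i = ((Rest σ i).filter (fun v => ent σ i < v)).card := by
  rw [chat_odd σ hi ho, Rest_succ σ hi, Finset.filter_erase,
    Finset.erase_eq_of_notMem]
  simp

lemma c3_char (σ : Equiv.Perm (Fin m)) {i : ℕ} (hi : i + 1 < m) :
    c3 σ i = ((Rest σ (i+1)).filter
      (fun v => odd3 (ent σ i) (ent σ (i+1)) v)).card := by
  have h1 : c3 σ i = ((Rest σ (i+2)).filter
      (fun v => odd3 (ent σ i) (ent σ (i+1)) v)).card := by
    unfold c3
    rw [← transfer σ (i+2) (fun v => odd3 (ent σ i) (ent σ (i+1)) v)]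
    apply congrArg
    apply Finset.filter_congr
    intro j _
    constructor
    · rintro ⟨hij, hodd⟩; exact ⟨by omega, hodd⟩
    · rintro ⟨hij, hodd⟩; exact ⟨by omega, hodd⟩
  rw [h1, Rest_succ σ hi, Finset.filter_erase, Finset.erase_eq_of_notMem]
  simp [odd3_bb]

lemma det_lt {T : Finset ℕ} {a a' : ℕ} (ha : a ∈ T) (ha' : a' ∈ T)
    (h : (T.filter (fun v => v < a)).card = (T.filter (fun v => v < a')).card) : a = a' := by
  by_contra hne
  have key : ∀ x y : ℕ, x ∈ T → x < y →
      (T.filter (fun v => v < x)).card < (T.filter (fun v => v < y)).card := by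
    intro x y hx hxy
    have hsub : T.filter (fun v => v < x) ⊆ T.filter (fun v => v < y) := by
      intro v hv
      simp only [Finset.mem_filter] at hv ⊢
      exact ⟨hv.1, by omega⟩
    apply card_lt_of_ssub hsub (x := x)
    · simp only [Finset.mem_filter]; exact ⟨hx, hxy⟩
    · simp only [Finset.mem_filter]; omega
  rcases Ne.lt_or_gt hne with hlt | hlt
  · have := key a a' ha hlt; omega
  · have := key a' a ha' hlt; omega

lemma det_gt {T : Finset ℕ} {a a' : ℕ} (ha : a ∈ T) (ha' : a' ∈ T)
    (h : (T.filter (fun v => a < v)).card = (T.filter (fun v => a' < v)).card) : a = a' := by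
  by_contra hne
  have key : ∀ x y : ℕ, y ∈ T → x < y →
      (T.filter (fun v => y < v)).card < (T.filter (fun v => x < v)).card := by
    intro x y hy hxy
    have hsub : T.filter (fun v => y < v) ⊆ T.filter (fun v => x < v) := by
      intro v hv
      simp only [Finset.mem_filter] at hv ⊢
      exact ⟨hv.1, by omega⟩
    apply card_lt_of_ssub hsub (x := y)
    · simp only [Finset.mem_filter]; exact ⟨hy, hxy⟩
    · simp only [Finset.mem_filter]; omega
  rcases Ne.lt_or_gt hne with hlt | hlt
  · have := key a a' ha' hlt; omega
  · have := key a' a ha hlt; omega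

lemma det_odd3 {T : Finset ℕ} {c b b' : ℕ} (hb : b ∈ T) (hb' : b' ∈ T)
    (hc : ∀ v ∈ T, v ≠ c)
    (h : (T.filter (fun v => odd3 c b v)).card
       = (T.filter (fun v => odd3 c b' v)).card) : b = b' := by
  have key : ∀ x y : ℕ, x ∈ T → y ∈ T → x < y →
      (T.filter (fun v => odd3 c x v)).card ≠ (T.filter (fun v => odd3 c y v)).card := by
    intro x y hx hy hxy
    have hxc := hc x hx
    have hyc := hc y hy
    rcases Nat.lt_or_ge c x with hcx | hcx
    · -- c < x < y : filter x ⊂ filter y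
      have hcy : c < y := by omega
      apply Nat.ne_of_lt
      have hsub : T.filter (fun v => odd3 c x v) ⊆ T.filter (fun v => odd3 c y v) := by
        intro v hv
        simp only [Finset.mem_filter] at hv ⊢
        have hvc := hc v hv.1
        refine ⟨hv.1, ?_⟩
        rw [odd3_lt hcx hvc] at hv
        exact (odd3_lt hcy hvc).2 ⟨hv.2.1, by omega⟩
      apply card_lt_of_ssub hsub (x := x)
      · simp only [Finset.mem_filter]
        exact ⟨hx, (odd3_lt hcy hxc).2 ⟨hcx, hxy⟩⟩
      · simp only [Finset.mem_filter, not_and]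
        exact fun _ => odd3_bb c x
    · rcases Nat.lt_or_ge c y with hcy | hcy
      · -- x < c < y : filter y ⊂ filter x
        have hxc' : x < c := by omega
        apply Nat.ne_of_gt
        have hsub : T.filter (fun v => odd3 c y v) ⊆ T.filter (fun v => odd3 c x v) := by
          intro v hv
          simp only [Finset.mem_filter] at hv ⊢
          have hvc := hc v hv.1
          refine ⟨hv.1, ?_⟩
          rw [odd3_lt hcy hvc] at hv
          exact (odd3_gt hxc' hvc).2 (Or.inr hv.2.1)
        apply card_lt_of_ssub hsub (x := y)
        · simp only [Finset.mem_filter]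
          exact ⟨hy, (odd3_gt hxc' hyc).2 (Or.inr hcy)⟩
        · simp only [Finset.mem_filter, not_and]
          exact fun _ => odd3_bb c y
      · -- x < y < c : filter x ⊂ filter y
        have hyc' : y < c := by omega
        have hxc' : x < c := by omega
        apply Nat.ne_of_lt
        have hsub : T.filter (fun v => odd3 c x v) ⊆ T.filter (fun v => odd3 c y v) := by
          intro v hv
          simp only [Finset.mem_filter] at hv ⊢
          have hvc := hc v hv.1
          refine ⟨hv.1, ?_⟩
          rw [odd3_gt hxc' hvc] at hv
          rw [odd3_gt hyc' hvc]
          rcases hv.2 with h1 | h1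
          · exact Or.inl (by omega)
          · exact Or.inr h1
        apply card_lt_of_ssub hsub (x := x)
        · simp only [Finset.mem_filter]
          exact ⟨hx, (odd3_gt hyc' hxc).2 (Or.inl hxy)⟩
        · simp only [Finset.mem_filter, not_and]
          exact fun _ => odd3_bb c x
  by_contra hne
  rcases Ne.lt_or_gt hne with hlt | hlt
  · exact key b b' hb hb' hlt h
  · exact key b' b hb' hb hlt h.symm
end Char
section Inj
open Finset
variable {m : ℕ}

lemma ent_eq_of_agree {σ σ' : Equiv.Perm (Fin m)} (h : ∀ i < m, ent σ i = ent σ' i) :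
    σ = σ' := by
  apply Equiv.ext
  intro x
  have := h x.val x.isLt
  unfold ent at this
  rw [dif_pos x.isLt, dif_pos x.isLt] at this
  have : σ ⟨x.val, x.isLt⟩ = σ' ⟨x.val, x.isLt⟩ := Fin.ext this
  simpa using this

lemma last_step {σ σ' : Equiv.Perm (Fin m)} {i : ℕ} (hi : i < m) (hlast : m ≤ i + 1)
    (hT : Rest σ i = Rest σ' i) : ent σ i = ent σ' i := by
  have hcard : (Rest σ i).card = 1 := by rw [Rest_card]; omega
  obtain ⟨x, hx⟩ := Finset.card_eq_one.mp hcard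
  have h1 : ent σ i ∈ Rest σ i := mem_Rest_self σ hi
  have h2 : ent σ' i ∈ Rest σ i := hT ▸ mem_Rest_self σ' hi
  rw [hx, Finset.mem_singleton] at h1 h2
  rw [h1, h2]

lemma chat_inj {ω ω' : Equiv.Perm (Fin m)} (h : ∀ i < m - 1, chat ω i = chat ω' i) :
    ω = ω' := by
  apply ent_eq_of_agree
  intro i
  induction i using Nat.strong_induction_on with
  | _ i ih =>
    intro him
    have hT : Rest ω i = Rest ω' i := Rest_congr i (fun k hk => ih k hk (by omega))
    have ha : ent ω i ∈ Rest ω i := mem_Rest_self ω him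
    have ha' : ent ω' i ∈ Rest ω i := hT ▸ mem_Rest_self ω' him
    by_cases hlast : i < m - 1
    · rcases Nat.even_or_odd i with he | ho
      · have e1 := chat_even' ω him he
        have e2 := chat_even' ω' him he
        rw [← hT] at e2
        apply det_lt ha ha'
        rw [← e1, ← e2, h i hlast]
      · have ho' : ¬ Even i := by simp [Nat.not_even_iff_odd]; exact ho
        have e1 := chat_odd' ω him ho'
        have e2 := chat_odd' ω' him ho'
        rw [← hT] at e2
        apply det_gt ha ha'
        rw [← e1, ← e2, h i hlast]
    · exact last_step him (by omega) hT

lemma c3_inj {σ σ' : Equiv.Perm (Fin m)} (h0 : ent σ 0 = 0) (h0' : ent σ' 0 = 0)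
    (h : ∀ i < m - 2, c3 σ i = c3 σ' i) : σ = σ' := by
  apply ent_eq_of_agree
  intro i
  induction i using Nat.strong_induction_on with
  | _ i ih =>
    intro him
    match i with
    | 0 => rw [h0, h0']
    | Nat.succ k =>
      have hk1 : k + 1 < m := him
      have hT : Rest σ (k+1) = Rest σ' (k+1) :=
        Rest_congr (k+1) (fun j hj => ih j hj (by omega))
      have hb : ent σ (k+1) ∈ Rest σ (k+1) := mem_Rest_self σ him
      have hb' : ent σ' (k+1) ∈ Rest σ (k+1) := hT ▸ mem_Rest_self σ' him
      have ha : ent σ k = ent σ' k := ih k (by omega) (by omega)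
      have hanm : ∀ v ∈ Rest σ (k+1), v ≠ ent σ k := by
        intro v hv hveq
        have := not_mem_Rest σ (k := k) (i := k+1) (by omega) (by omega)
        rw [← hveq] at this
        exact this hv
      by_cases hcode : k < m - 2
      · have e1 := c3_char σ (i := k) hk1
        have e2 := c3_char σ' (i := k) hk1
        rw [← hT, ← ha] at e2
        apply det_odd3 hb hb' hanm
        rw [← e1, ← e2, h k hcode]
      · exact last_step him (by omega) hT
end Inj
section Desc
open Finset
variable {m : ℕ}

lemma desc_core (i : ℕ) (him : i + 1 < m) (P Q : ℕ → Prop)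
    [DecidablePred P] [DecidablePred Q] (d : Prop)
    (hcover : d → ∀ j, i + 1 < j → j < m → P j ∨ Q j)
    (hdisj : ¬ d → ∀ j, i + 1 < j → j < m → ¬ (P j ∧ Q j))
    (hPd : P (i+1) ↔ d) :
    (d ↔ m - 1 - i ≤ (if P (i+1) then 1 else 0)
      + ((Finset.range m).filter (fun j => i + 1 < j ∧ P j)).card
      + ((Finset.range m).filter (fun j => i + 1 < j ∧ Q j)).card) := by
  classical
  set F1 := (Finset.range m).filter (fun j => i + 1 < j ∧ P j) with hF1
  set F2 := (Finset.range m).filter (fun j => i + 1 < j ∧ Q j) with hF2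
  have hS : ((Finset.range m).filter (fun j => i + 1 < j)).card = m - (i + 2) :=
    filter_gt_card (i+1)
  constructor
  · intro hd
    rw [if_pos (hPd.mpr hd)]
    have hcov : (Finset.range m).filter (fun j => i + 1 < j) ⊆ F1 ∪ F2 := by
      intro j hj
      simp only [Finset.mem_filter, Finset.mem_range] at hj
      simp only [hF1, hF2, Finset.mem_union, Finset.mem_filter, Finset.mem_range]
      rcases hcover hd j hj.2 hj.1 with h | h
      · exact Or.inl ⟨hj.1, hj.2, h⟩
      · exact Or.inr ⟨hj.1, hj.2, h⟩
    have h1 := Finset.card_le_card hcov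
    have h2 := Finset.card_union_le F1 F2
    omega
  · intro hle
    by_contra hd
    rw [if_neg (fun hp => hd (hPd.mp hp))] at hle
    have hsub : F1 ∪ F2 ⊆ (Finset.range m).filter (fun j => i + 1 < j) := by
      intro j hj
      simp only [hF1, hF2, Finset.mem_union, Finset.mem_filter, Finset.mem_range] at hj ⊢
      rcases hj with ⟨h1, h2, _⟩ | ⟨h1, h2, _⟩ <;> exact ⟨h1, h2⟩
    have hdis : Disjoint F1 F2 := by
      rw [Finset.disjoint_left]
      intro j hj1 hj2
      simp only [hF1, hF2, Finset.mem_filter, Finset.mem_range] at hj1 hj2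
      exact hdisj hd j hj1.2.1 hj1.1 ⟨hj1.2.2, hj2.2.2⟩
    have h1 := Finset.card_union_of_disjoint hdis
    have h2 := Finset.card_le_card hsub
    omega

lemma chat_desc_iff (ω : Equiv.Perm (Fin m)) {i : ℕ} (hi : i + 1 < m) :
    ((Even i ∧ ent ω (i+1) < ent ω i) ∨ (¬ Even i ∧ ent ω i < ent ω (i+1)))
      ↔ m - 1 - i ≤ chat ω i + chat ω (i+1) := by
  classical
  have hne : ∀ j k, j < m → k < m → j ≠ k → ent ω j ≠ ent ω k := by
    intro j k hj hk hjk h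
    exact hjk (ent_inj ω hj hk h)
  rcases Nat.even_or_odd i with he | hoo
  · have ho1 : ¬ Even (i+1) := by simp [Nat.even_add_one, he]
    have e1 : chat ω i = (if ent ω (i+1) < ent ω i then 1 else 0)
        + ((Finset.range m).filter (fun j => i + 1 < j ∧ ent ω j < ent ω i)).card := by
      unfold chat
      rw [show ((Finset.range m).filter (fun j => i < j ∧
          ((Even i ∧ ent ω j < ent ω i) ∨ (¬ Even i ∧ ent ω i < ent ω j))))
          = ((Finset.range m).filter (fun j => i < j ∧ ent ω j < ent ω i)) from
        Finset.filter_congr (fun j _ => by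
          constructor
          · rintro ⟨h1, (⟨_, h2⟩ | ⟨h2, _⟩)⟩
            · exact ⟨h1, h2⟩
            · exact absurd he h2
          · rintro ⟨h1, h2⟩; exact ⟨h1, Or.inl ⟨he, h2⟩⟩)]
      exact helper_split i (fun j => ent ω j < ent ω i) hi
    have e2 : chat ω (i+1)
        = ((Finset.range m).filter (fun j => i + 1 < j ∧ ent ω (i+1) < ent ω j)).card := by
      unfold chat
      apply congrArg
      apply Finset.filter_congr
      intro j _
      constructor
      · rintro ⟨h1, (⟨h2, _⟩ | ⟨_, h2⟩)⟩
        · exact absurd h2 ho1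
        · exact ⟨h1, h2⟩
      · rintro ⟨h1, h2⟩; exact ⟨h1, Or.inr ⟨ho1, h2⟩⟩
    have core := desc_core i hi (fun j => ent ω j < ent ω i)
      (fun j => ent ω (i+1) < ent ω j) (ent ω (i+1) < ent ω i)
      (fun hd j hj1 hj2 => by
        have n1 := hne j i hj2 (by omega) (by omega)
        have n2 := hne j (i+1) hj2 (by omega) (by omega)
        omega)
      (fun hd j hj1 hj2 => by
        have n3 := hne i (i+1) (by omega) (by omega) (by omega)
        omega)
      Iff.rfl
    beta_reduce at core
    rw [e1, e2]
    constructor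
    · rintro (⟨_, h⟩ | ⟨h, _⟩)
      · have := core.mp h; omega
      · exact absurd he h
    · intro hle
      exact Or.inl ⟨he, core.mpr (by omega)⟩
  · have ho : ¬ Even i := Nat.not_even_iff_odd.mpr hoo
    have he1 : Even (i+1) := Nat.even_add_one.mpr ho
    have e1 : chat ω i = (if ent ω i < ent ω (i+1) then 1 else 0)
        + ((Finset.range m).filter (fun j => i + 1 < j ∧ ent ω i < ent ω j)).card := by
      unfold chat
      rw [show ((Finset.range m).filter (fun j => i < j ∧
          ((Even i ∧ ent ω j < ent ω i) ∨ (¬ Even i ∧ ent ω i < ent ω j))))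
          = ((Finset.range m).filter (fun j => i < j ∧ ent ω i < ent ω j)) from
        Finset.filter_congr (fun j _ => by
          constructor
          · rintro ⟨h1, (⟨h2, _⟩ | ⟨_, h2⟩)⟩
            · exact absurd h2 ho
            · exact ⟨h1, h2⟩
          · rintro ⟨h1, h2⟩; exact ⟨h1, Or.inr ⟨ho, h2⟩⟩)]
      exact helper_split i (fun j => ent ω i < ent ω j) hi
    have e2 : chat ω (i+1)
        = ((Finset.range m).filter (fun j => i + 1 < j ∧ ent ω j < ent ω (i+1))).card := by
      unfold chat
      apply congrArg
      apply Finset.filter_congr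
      intro j _
      constructor
      · rintro ⟨h1, (⟨_, h2⟩ | ⟨h2, _⟩)⟩
        · exact ⟨h1, h2⟩
        · exact absurd he1 h2
      · rintro ⟨h1, h2⟩; exact ⟨h1, Or.inl ⟨he1, h2⟩⟩
    have core := desc_core i hi (fun j => ent ω i < ent ω j)
      (fun j => ent ω j < ent ω (i+1)) (ent ω i < ent ω (i+1))
      (fun hd j hj1 hj2 => by
        have n1 := hne j i hj2 (by omega) (by omega)
        have n2 := hne j (i+1) hj2 (by omega) (by omega)
        omega)
      (fun hd j hj1 hj2 => by
        have n3 := hne i (i+1) (by omega) (by omega) (by omega)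
        omega)
      Iff.rfl
    beta_reduce at core
    rw [e1, e2]
    constructor
    · rintro (⟨h, _⟩ | ⟨_, h⟩)
      · exact absurd h ho
      · have := core.mp h; omega
    · intro hle
      exact Or.inr ⟨ho, core.mpr (by omega)⟩

lemma c3_desc_iff (σ : Equiv.Perm (Fin m)) {i : ℕ} (hi : i + 2 < m) :
    odd3 (ent σ i) (ent σ (i+1)) (ent σ (i+2))
      ↔ m - 2 - i ≤ c3 σ i + c3 σ (i+1) := by
  classical
  have hne : ∀ j k, j < m → k < m → j ≠ k → ent σ j ≠ ent σ k := by
    intro j k hj hk hjk h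
    exact hjk (ent_inj σ hj hk h)
  have e1 : c3 σ i = (if odd3 (ent σ i) (ent σ (i+1)) (ent σ (i+2)) then 1 else 0)
      + ((Finset.range m).filter
          (fun j => i + 2 < j ∧ odd3 (ent σ i) (ent σ (i+1)) (ent σ j))).card := by
    unfold c3
    exact helper_split (i+1) (fun j => odd3 (ent σ i) (ent σ (i+1)) (ent σ j)) hi
  have e2 : c3 σ (i+1) = ((Finset.range m).filter
      (fun j => i + 2 < j ∧ odd3 (ent σ (i+1)) (ent σ (i+2)) (ent σ j))).card := by
    unfold c3
    rfl
  have core := desc_core (i+1) hi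
    (fun j => odd3 (ent σ i) (ent σ (i+1)) (ent σ j))
    (fun j => odd3 (ent σ (i+1)) (ent σ (i+2)) (ent σ j))
    (odd3 (ent σ i) (ent σ (i+1)) (ent σ (i+2)))
    (fun hd j hj1 hj2 => four1 hd
      (hne i (i+1) (by omega) (by omega) (by omega))
      (hne i (i+2) (by omega) (by omega) (by omega))
      (hne i j (by omega) hj2 (by omega))
      (hne (i+1) (i+2) (by omega) (by omega) (by omega))
      (hne (i+1) j (by omega) hj2 (by omega))
      (hne (i+2) j (by omega) hj2 (by omega)))
    (fun hd j hj1 hj2 => four2 hd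
      (hne i (i+1) (by omega) (by omega) (by omega))
      (hne i (i+2) (by omega) (by omega) (by omega))
      (hne i j (by omega) hj2 (by omega))
      (hne (i+1) (i+2) (by omega) (by omega) (by omega))
      (hne (i+1) j (by omega) hj2 (by omega))
      (hne (i+2) j (by omega) hj2 (by omega)))
    Iff.rfl
  beta_reduce at core
  simp only [show i + 1 + 1 = i + 2 by omega] at core
  rw [e1, e2]
  constructor
  · intro h
    have := core.mp h
    omega
  · intro hle
    exact core.mpr (by omega)

lemma chat_le (σ : Equiv.Perm (Fin m)) (i : ℕ) : chat σ i ≤ m - (i + 1) := by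
  unfold chat
  rw [← filter_gt_card (m := m) i]
  apply Finset.card_le_card
  intro j hj
  simp only [Finset.mem_filter, Finset.mem_range] at hj ⊢
  exact ⟨hj.1, hj.2.1⟩

lemma c3_le (σ : Equiv.Perm (Fin m)) (i : ℕ) : c3 σ i ≤ m - (i + 2) := by
  unfold c3
  rw [← filter_gt_card (m := m) (i+1)]
  apply Finset.card_le_card
  intro j hj
  simp only [Finset.mem_filter, Finset.mem_range] at hj ⊢
  exact ⟨hj.1, hj.2.1⟩

lemma chat_zero (σ : Equiv.Perm (Fin m)) {i : ℕ} (hi : m ≤ i + 1) : chat σ i = 0 := by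
  have := chat_le σ i; omega

lemma c3_zero (σ : Equiv.Perm (Fin m)) {i : ℕ} (hi : m ≤ i + 2) : c3 σ i = 0 := by
  have := c3_le σ i; omega
end Desc
section Sums
open Finset

lemma card_prod_filter {s t : Finset ℕ} (P : ℕ → ℕ → Prop) [∀ a, DecidablePred (P a)] :
    ((s ×ˢ t).filter (fun p => P p.1 p.2)).card = ∑ a ∈ s, (t.filter (P a)).card := by
  classical
  rw [Finset.card_eq_sum_card_fiberwise (f := Prod.fst) (t := s)
    (fun p hp => by
      simp only [Finset.mem_coe, Finset.mem_filter, Finset.mem_product] at hp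
      exact hp.1.1)]
  apply Finset.sum_congr rfl
  intro a ha
  apply Finset.card_bij (fun p _ => p.2)
  · intro p hp
    simp only [Finset.mem_filter, Finset.mem_product] at hp ⊢
    obtain ⟨⟨⟨_, h2⟩, hP⟩, h1⟩ := hp
    subst h1
    exact ⟨h2, hP⟩
  · rintro ⟨p1, p2⟩ hp ⟨q1, q2⟩ hq h
    simp only [Finset.mem_filter, Finset.mem_product] at hp hq
    cases h
    rw [Prod.mk.injEq]
    exact ⟨hp.2.trans hq.2.symm, rfl⟩
  · intro b hb
    simp only [Finset.mem_filter] at hb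
    refine ⟨(a, b), ?_, rfl⟩
    simp only [Finset.mem_filter, Finset.mem_product]
    exact ⟨⟨⟨ha, hb.1⟩, hb.2⟩, trivial⟩

lemma i3_sum {m : ℕ} (σ : Equiv.Perm (Fin m)) : i3 σ = ∑ i ∈ Finset.range m, c3 σ i := by
  unfold i3 i3f c3
  exact card_prod_filter (fun a b => a + 1 < b ∧ odd3 (ent σ a) (ent σ (a+1)) (ent σ b))

lemma altInv_sum {m : ℕ} (ω : Equiv.Perm (Fin m)) :
    altInv ω = ∑ i ∈ Finset.range m, chat ω i := by
  unfold altInv chat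
  exact card_prod_filter (fun a b => a < b ∧
    ((Even a ∧ ent ω b < ent ω a) ∨ (¬ Even a ∧ ent ω a < ent ω b)))

lemma sum_trunc {k m : ℕ} (f : ℕ → ℕ) (hk : k ≤ m) (h : ∀ i, k ≤ i → f i = 0) :
    ∑ i ∈ Finset.range m, f i = ∑ i ∈ Finset.range k, f i := by
  symm
  apply Finset.sum_subset (Finset.range_subset_range.mpr hk)
  intro x hx hnx
  simp only [Finset.mem_range] at hx hnx
  exact h x (by omega)

lemma prod_desc (n : ℕ) : (∏ i ∈ Finset.range (n-1), (n - i)) = Nat.factorial n := by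
  have h1 := Nat.descFactorial_eq_prod_range n (n-1)
  rw [← h1]
  cases n with
  | zero => simp
  | succ k =>
    have h2 : (k+1).descFactorial (k+1) = ((k+1) - k) * (k+1).descFactorial k :=
      Nat.descFactorial_succ (k+1) k
    have h3 : (k+1).descFactorial (k+1) = Nat.factorial (k+1) := Nat.descFactorial_self (k+1)
    simp only [Nat.add_sub_cancel_left] at h2
    simp only [Nat.succ_sub_one]
    omega

lemma card_fix (n : ℕ) :
    ((Finset.univ : Finset (Equiv.Perm (Fin (n+1)))).filter (fun σ => σ 0 = 0)).card
      = Nat.factorial n := by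
  classical
  have hfst : ∀ σ : Equiv.Perm (Fin (n+1)), (Equiv.Perm.decomposeFin σ).1 = σ 0 := by
    intro σ
    conv_rhs => rw [← Equiv.symm_apply_apply Equiv.Perm.decomposeFin σ]
    rw [show Equiv.Perm.decomposeFin σ
        = ((Equiv.Perm.decomposeFin σ).1, (Equiv.Perm.decomposeFin σ).2) from rfl]
    rw [Equiv.Perm.decomposeFin_symm_apply_zero]
  have hcard : ((Finset.univ : Finset (Equiv.Perm (Fin (n+1)))).filter
      (fun σ => σ 0 = 0)).card = (Finset.univ : Finset (Equiv.Perm (Fin n))).card := by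
    apply Finset.card_bij (fun σ _ => (Equiv.Perm.decomposeFin σ).2)
    · intro σ _; exact Finset.mem_univ _
    · intro σ hσ σ' hσ' h
      simp only [Finset.mem_filter] at hσ hσ'
      have h1 : Equiv.Perm.decomposeFin σ = Equiv.Perm.decomposeFin σ' := by
        ext1
        · rw [hfst, hfst, hσ.2, hσ'.2]
        · exact h
      have := congrArg Equiv.Perm.decomposeFin.symm h1
      simpa using this
    · intro τ _
      refine ⟨Equiv.Perm.decomposeFin.symm (0, τ), ?_, ?_⟩
      · simp only [Finset.mem_filter, Finset.mem_univ, true_and]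
        exact Equiv.Perm.decomposeFin_symm_apply_zero 0 τ
      · rw [Equiv.apply_symm_apply]
  rw [hcard, Finset.card_univ, Fintype.card_perm, Fintype.card_fin]
end Sums
section Main
open Finset

/-- the box of codes. -/
abbrev BoxT (n : ℕ) := ∀ i : Fin (n-1), Fin (n - (i : ℕ))

noncomputable def codeA (n : ℕ) (σ : Equiv.Perm (Fin (n+1))) : BoxT n :=
  fun i => ⟨c3 σ (i : ℕ), by
    have h1 := c3_le σ (i : ℕ)
    have h2 := i.isLt
    omega⟩

noncomputable def codeB (n : ℕ) (ω : Equiv.Perm (Fin n)) : BoxT n :=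
  fun i => ⟨chat ω (i : ℕ), by
    have h1 := chat_le ω (i : ℕ)
    have h2 := i.isLt
    omega⟩

noncomputable def ccf (n : ℕ) (c : BoxT n) (i : ℕ) : ℕ :=
  if h : i < n - 1 then (c ⟨i, h⟩ : ℕ) else 0

noncomputable def Ffun (n : ℕ) (c : BoxT n) : MvPolynomial (Fin 2) ℚ :=
  (MvPolynomial.X 0 : MvPolynomial (Fin 2) ℚ)
      ^ ((Finset.range (n-1)).filter (fun i => n - 1 - i ≤ ccf n c i + ccf n c (i+1))).card
    * (MvPolynomial.X 1 : MvPolynomial (Fin 2) ℚ) ^ (∑ i ∈ Finset.range (n-1), ccf n c i)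

lemma ccf_codeA (n : ℕ) (σ : Equiv.Perm (Fin (n+1))) (i : ℕ) :
    ccf n (codeA n σ) i = c3 σ i := by
  unfold ccf codeA
  split
  · rfl
  · rename_i h
    rw [c3_zero σ (by omega)]

lemma ccf_codeB (n : ℕ) (ω : Equiv.Perm (Fin n)) (i : ℕ) :
    ccf n (codeB n ω) i = chat ω i := by
  unfold ccf codeB
  split
  · rfl
  · rename_i h
    rw [chat_zero ω (by omega)]

lemma termA (n : ℕ) (σ : Equiv.Perm (Fin (n+1))) :
    (MvPolynomial.X 0 : MvPolynomial (Fin 2) ℚ) ^ ((D3 σ).card) *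
      (MvPolynomial.X 1 : MvPolynomial (Fin 2) ℚ) ^ (i3 σ) = Ffun n (codeA n σ) := by
  unfold Ffun
  have hD : (D3 σ).card = ((Finset.range (n-1)).filter
      (fun i => n - 1 - i ≤ ccf n (codeA n σ) i + ccf n (codeA n σ) (i+1))).card := by
    unfold D3
    have hr : n + 1 - 2 = n - 1 := by omega
    rw [hr]
    apply congrArg
    apply Finset.filter_congr
    intro i hi
    simp only [Finset.mem_range] at hi
    rw [ccf_codeA, ccf_codeA]
    have := c3_desc_iff σ (i := i) (by omega)
    rw [show n + 1 - 2 - i = n - 1 - i by omega] at this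
    exact this
  have hI : i3 σ = ∑ i ∈ Finset.range (n-1), ccf n (codeA n σ) i := by
    rw [i3_sum σ, sum_trunc (k := n-1) (m := n+1) (fun i => c3 σ i) (by omega) (fun i hi => c3_zero σ (by omega))]
    apply Finset.sum_congr rfl
    intro i _
    rw [ccf_codeA]
  rw [hD, hI]

lemma termB (n : ℕ) (ω : Equiv.Perm (Fin n)) :
    (MvPolynomial.X 0 : MvPolynomial (Fin 2) ℚ) ^ ((altD ω).card) *
      (MvPolynomial.X 1 : MvPolynomial (Fin 2) ℚ) ^ (altInv ω) = Ffun n (codeB n ω) := by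
  unfold Ffun
  have hD : (altD ω).card = ((Finset.range (n-1)).filter
      (fun i => n - 1 - i ≤ ccf n (codeB n ω) i + ccf n (codeB n ω) (i+1))).card := by
    unfold altD
    apply congrArg
    apply Finset.filter_congr
    intro i hi
    simp only [Finset.mem_range] at hi
    rw [ccf_codeB, ccf_codeB]
    exact chat_desc_iff ω (i := i) (by omega)
  have hI : altInv ω = ∑ i ∈ Finset.range (n-1), ccf n (codeB n ω) i := by
    rw [altInv_sum ω, sum_trunc (k := n-1) (m := n) (fun i => chat ω i) (by omega)
      (fun i hi => chat_zero ω (by omega))]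
    apply Finset.sum_congr rfl
    intro i _
    rw [ccf_codeB]
  rw [hD, hI]

lemma card_BoxT (n : ℕ) : Fintype.card (BoxT n) = Nat.factorial n := by
  rw [Fintype.card_pi]
  have h1 : (∏ i : Fin (n-1), Fintype.card (Fin (n - (i : ℕ))))
      = ∏ i : Fin (n-1), (n - (i : ℕ)) := by
    apply Finset.prod_congr rfl
    intro i _
    exact Fintype.card_fin _
  rw [h1, Fin.prod_univ_eq_prod_range (fun i => n - i) (n-1)]
  exact prod_desc n

lemma ent_zero {m : ℕ} (σ : Equiv.Perm (Fin (m+1))) (h : σ 0 = 0) : ent σ 0 = 0 := by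
  unfold ent
  rw [dif_pos (Nat.succ_pos m)]
  have : (⟨0, Nat.succ_pos m⟩ : Fin (m+1)) = 0 := by
    apply Fin.ext
    simp
  rw [this, h]
  simp

lemma codeA_injOn (n : ℕ) (σ σ' : Equiv.Perm (Fin (n+1))) (h0 : σ 0 = 0) (h0' : σ' 0 = 0)
    (h : codeA n σ = codeA n σ') : σ = σ' := by
  apply c3_inj (ent_zero σ h0) (ent_zero σ' h0')
  intro i hi
  have hi' : i < n - 1 := by omega
  have := congrFun h ⟨i, hi'⟩
  exact congrArg Fin.val this

lemma codeB_inj (n : ℕ) (ω ω' : Equiv.Perm (Fin n)) (h : codeB n ω = codeB n ω') : ω = ω' := by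
  apply chat_inj
  intro i hi
  have := congrFun h ⟨i, hi⟩
  exact congrArg Fin.val this
end Main
theorem stmt10 (n : ℕ) :
    ∑ σ ∈ (Finset.univ : Finset (Equiv.Perm (Fin (n + 1)))).filter (fun σ => σ 0 = 0),
        (MvPolynomial.X 0 : MvPolynomial (Fin 2) ℚ) ^ ((D3 σ).card) *
          (MvPolynomial.X 1 : MvPolynomial (Fin 2) ℚ) ^ (i3 σ) =
      ∑ ω : Equiv.Perm (Fin n),
        (MvPolynomial.X 0 : MvPolynomial (Fin 2) ℚ) ^ ((altD ω).card) *
          (MvPolynomial.X 1 : MvPolynomial (Fin 2) ℚ) ^ (altInv ω) := by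
  classical
  set F := (Finset.univ : Finset (Equiv.Perm (Fin (n + 1)))).filter (fun σ => σ 0 = 0) with hF
  have hA : ∀ σ ∈ F, ∀ σ' ∈ F, codeA n σ = codeA n σ' → σ = σ' := by
    intro σ hσ σ' hσ' h
    rw [hF, Finset.mem_filter] at hσ hσ'
    exact codeA_injOn n σ σ' hσ.2 hσ'.2 h
  have hB : ∀ ω ∈ (Finset.univ : Finset (Equiv.Perm (Fin n))),
      ∀ ω' ∈ (Finset.univ : Finset (Equiv.Perm (Fin n))),
      codeB n ω = codeB n ω' → ω = ω' := by
    intro ω _ ω' _ h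
    exact codeB_inj n ω ω' h
  have himA : F.image (codeA n) = Finset.univ := by
    apply Finset.eq_univ_of_card
    rw [Finset.card_image_of_injOn hA, hF, card_fix n, card_BoxT n]
  have himB : (Finset.univ : Finset (Equiv.Perm (Fin n))).image (codeB n) = Finset.univ := by
    apply Finset.eq_univ_of_card
    rw [Finset.card_image_of_injOn hB, Finset.card_univ, Fintype.card_perm,
      Fintype.card_fin, card_BoxT n]
  calc ∑ σ ∈ F, (MvPolynomial.X 0 : MvPolynomial (Fin 2) ℚ) ^ ((D3 σ).card) *
          (MvPolynomial.X 1 : MvPolynomial (Fin 2) ℚ) ^ (i3 σ)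
      = ∑ σ ∈ F, Ffun n (codeA n σ) := Finset.sum_congr rfl (fun σ _ => termA n σ)
    _ = ∑ c ∈ F.image (codeA n), Ffun n c := (Finset.sum_image hA).symm
    _ = ∑ c ∈ (Finset.univ : Finset (BoxT n)), Ffun n c := by rw [himA]
    _ = ∑ c ∈ (Finset.univ : Finset (Equiv.Perm (Fin n))).image (codeB n), Ffun n c := by
        rw [himB]
    _ = ∑ ω : Equiv.Perm (Fin n), Ffun n (codeB n ω) := Finset.sum_image hB
    _ = ∑ ω : Equiv.Perm (Fin n),
          (MvPolynomial.X 0 : MvPolynomial (Fin 2) ℚ) ^ ((altD ω).card) *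
            (MvPolynomial.X 1 : MvPolynomial (Fin 2) ℚ) ^ (altInv ω) :=
        Finset.sum_congr rfl (fun ω _ => (termB n ω).symm)
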